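/- arXiv:1801.06414 — 6 statements merged into one kernel-verified Lean document; each statement's English description precedes it below -/
import Mathlib

section
/- Let ψ ∈ ℂ^{d_A} ⊗ ℂ^{d_B} be a unit vector and let ρ_A = Tr_B(|ψ⟩⟨ψ|) be its reduced density matrix. Let S_A and S_B be the symmetric projectors on (ℂ^{d_A})^{⊗2} and (ℂ^{d_B})^{⊗2}. Then Tr_B(S_A S_B |ψ⟩⟨ψ|^{⊗2}) = S_A (ρ_A ⊗ ρ_A) S_A, where the partial trace is over both copies of ℂ^{d_B} after the reordering of tensor factors. -/
open Matrix BigOperators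
open scoped Kronecker ComplexConjugate

noncomputable section

def swapMat (I : Type*) [DecidableEq I] [Fintype I] : Matrix (I × I) (I × I) ℂ :=
  fun p q => if p.1 = q.2 ∧ p.2 = q.1 then 1 else 0

def symProj (I : Type*) [DecidableEq I] [Fintype I] : Matrix (I × I) (I × I) ℂ :=
  (2⁻¹ : ℂ) • (1 + swapMat I)

def asymProj (I : Type*) [DecidableEq I] [Fintype I] : Matrix (I × I) (I × I) ℂ :=
  (2⁻¹ : ℂ) • (1 - swapMat I)

/-- reordering (1,2,3,4) ↦ (1,3,2,4) of tensor factors -/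
def reorder (A B : Type*) : ((A × B) × (A × B)) ≃ ((A × A) × (B × B)) where
  toFun x := ((x.1.1, x.2.1), (x.1.2, x.2.2))
  invFun y := ((y.1.1, y.2.1), (y.1.2, y.2.2))
  left_inv x := rfl
  right_inv y := rfl

/-- |ψ⟩⟨ψ| -/
def outer {I : Type*} (ψ : I → ℂ) : Matrix I I ℂ := fun i j => ψ i * conj (ψ j)

/-- ψ ⊗ ψ -/
def vec2 {I : Type*} (ψ : I → ℂ) : I × I → ℂ := fun p => ψ p.1 * ψ p.2

/-- |ψ⟩⟨ψ|^{⊗2} -/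
def pure2 {I : Type*} (ψ : I → ℂ) : Matrix (I × I) (I × I) ℂ := outer (vec2 ψ)

def unitVec {I : Type*} [Fintype I] (ψ : I → ℂ) : Prop := ∑ i, Complex.normSq (ψ i) = 1

/-- partial trace over the second factor -/
def ptraceB {A B : Type*} [Fintype B] (M : Matrix (A × B) (A × B) ℂ) : Matrix A A ℂ :=
  fun a a' => ∑ b, M (a, b) (a', b)

/-- reindex an operator on (ℂ^A ⊗ ℂ^B)^{⊗2} as an operator on (ℂ^A)^{⊗2} ⊗ (ℂ^B)^{⊗2} -/
def reindexAB {A B : Type*} (M : Matrix ((A × B) × (A × B)) ((A × B) × (A × B)) ℂ) :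
    Matrix ((A × A) × (B × B)) ((A × A) × (B × B)) ℂ :=
  M.submatrix (reorder A B).symm (reorder A B).symm


section Aux

variable {I : Type*} [DecidableEq I] [Fintype I]

lemma swapMat_apply' (p q : I × I) : swapMat I p q = if q = p.swap then 1 else 0 := by
  have h : (p.1 = q.2 ∧ p.2 = q.1) ↔ q = p.swap := by
    rw [Prod.ext_iff]
    exact ⟨fun ⟨a, b⟩ => ⟨b.symm, a.symm⟩, fun ⟨a, b⟩ => ⟨b.symm, a.symm⟩⟩
  simp only [swapMat, h]

lemma swapMat_apply'' (p q : I × I) : swapMat I p q = if p = q.swap then 1 else 0 := by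
  have h : (p.1 = q.2 ∧ p.2 = q.1) ↔ p = q.swap := by
    rw [Prod.ext_iff]
    exact Iff.rfl
  simp only [swapMat, h]

lemma swapMat_mul {n : Type*} [Fintype n] (M : Matrix (I × I) n ℂ) (p : I × I) (q : n) :
    (swapMat I * M) p q = M p.swap q := by
  rw [Matrix.mul_apply]
  simp [swapMat_apply', ite_mul]

lemma mul_swapMat {n : Type*} [Fintype n] (M : Matrix n (I × I) ℂ) (p : n) (q : I × I) :
    (M * swapMat I) p q = M p q.swap := by
  rw [Matrix.mul_apply]
  simp [swapMat_apply'', mul_ite]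

end Aux

lemma kron_symProj_mul {A B : Type*} [DecidableEq A] [Fintype A] [DecidableEq B] [Fintype B]
    (M : Matrix ((A × A) × (B × B)) ((A × A) × (B × B)) ℂ) (x : A × A) (β : B × B)
    (w : (A × A) × (B × B)) :
    ((symProj A ⊗ₖ symProj B) * M) (x, β) w =
      (4⁻¹ : ℂ) * (M (x, β) w + M (x.swap, β) w
        + M (x, β.swap) w + M (x.swap, β.swap) w) := by
  rw [Matrix.mul_apply, Fintype.sum_prod_type]
  simp only [Matrix.kroneckerMap_apply, symProj, Matrix.smul_apply, Matrix.add_apply,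
    Matrix.one_apply, swapMat_apply', smul_eq_mul]
  simp only [mul_add, add_mul, ite_mul, mul_ite, one_mul, mul_one, zero_mul, mul_zero,
    Finset.sum_add_distrib, Finset.sum_ite_eq, Finset.sum_ite_eq', Finset.mem_univ, if_true]
  ring

theorem stmt_2 (dA dB : ℕ) (ψ : Fin dA × Fin dB → ℂ) (hψ : unitVec ψ)
    (ρA : Matrix (Fin dA) (Fin dA) ℂ) (hρ : ρA = ptraceB (outer ψ)) :
    ptraceB ((symProj (Fin dA) ⊗ₖ symProj (Fin dB)) * reindexAB (pure2 ψ)) =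
      symProj (Fin dA) * (ρA ⊗ₖ ρA) * symProj (Fin dA) := by
  subst hρ
  set Φ : (Fin dA × Fin dA) × (Fin dB × Fin dB) → ℂ :=
    fun z => ψ (z.1.1, z.2.1) * ψ (z.1.2, z.2.2) with hΦ
  have hre : reindexAB (pure2 ψ) = outer Φ := by
    ext z w
    rfl
  have hΦswap : ∀ (x : Fin dA × Fin dA) (β : Fin dB × Fin dB),
      Φ (x.swap, β.swap) = Φ (x, β) := by
    intro x β; simp only [hΦ, Prod.swap]; ring
  have hΦmix : ∀ (x : Fin dA × Fin dA) (β : Fin dB × Fin dB),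
      Φ (x, β.swap) = Φ (x.swap, β) := by
    intro x β; simp only [hΦ, Prod.swap]; ring
  ext x y
  rw [ptraceB, hre]
  have hL : ∀ β : Fin dB × Fin dB,
      ((symProj (Fin dA) ⊗ₖ symProj (Fin dB)) * outer Φ) (x, β) (y, β) =
        (2⁻¹ : ℂ) * ((Φ (x, β) + Φ (x.swap, β)) * conj (Φ (y, β))) := by
    intro β
    rw [kron_symProj_mul]
    simp only [outer]
    rw [hΦmix x β, hΦswap x β]
    ring
  have hT : ∀ u v : Fin dA × Fin dA,
      (ptraceB (outer ψ) ⊗ₖ ptraceB (outer ψ)) u v =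
        ∑ β : Fin dB × Fin dB, Φ (u, β) * conj (Φ (v, β)) := by
    intro u v
    simp only [Matrix.kroneckerMap_apply, ptraceB, outer]
    rw [Finset.sum_mul_sum, Fintype.sum_prod_type]
    apply Finset.sum_congr rfl; intro b _
    apply Finset.sum_congr rfl; intro d _
    simp only [hΦ, _root_.map_mul]
    ring
  have hsw : ∀ u : Fin dA × Fin dA,
      (∑ β : Fin dB × Fin dB, Φ (u, β) * conj (Φ (y.swap, β))) =
        ∑ β : Fin dB × Fin dB, Φ (u.swap, β) * conj (Φ (y, β)) := by
    intro u
    rw [← Equiv.sum_comp (Equiv.prodComm (Fin dB) (Fin dB))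
      (fun β => Φ (u.swap, β) * conj (Φ (y, β)))]
    apply Finset.sum_congr rfl
    intro β _
    have h : (Equiv.prodComm (Fin dB) (Fin dB)) β = β.swap := rfl
    rw [h, hΦswap u β, hΦmix y β]
  have hR : (symProj (Fin dA) * (ptraceB (outer ψ) ⊗ₖ ptraceB (outer ψ)) * symProj (Fin dA)) x y =
      ∑ β : Fin dB × Fin dB,
        (2⁻¹ : ℂ) * ((Φ (x, β) + Φ (x.swap, β)) * conj (Φ (y, β))) := by
    have e1 : (symProj (Fin dA) * (ptraceB (outer ψ) ⊗ₖ ptraceB (outer ψ)) * symProj (Fin dA)) x y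
        = (4⁻¹ : ℂ) * (((ptraceB (outer ψ) ⊗ₖ ptraceB (outer ψ)) x y
          + (ptraceB (outer ψ) ⊗ₖ ptraceB (outer ψ)) x.swap y)
          + ((ptraceB (outer ψ) ⊗ₖ ptraceB (outer ψ)) x y.swap
          + (ptraceB (outer ψ) ⊗ₖ ptraceB (outer ψ)) x.swap y.swap)) := by
      simp only [symProj, Matrix.smul_mul, Matrix.mul_smul, Matrix.add_mul, Matrix.mul_add,
        Matrix.one_mul, Matrix.mul_one, Matrix.smul_apply, Matrix.add_apply, smul_eq_mul]
      rw [mul_swapMat, mul_swapMat, swapMat_mul, swapMat_mul]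
      ring
    rw [e1, hT, hT, hT, hT, hsw x, hsw x.swap, Prod.swap_swap,
      ← Finset.sum_add_distrib, ← Finset.sum_add_distrib, ← Finset.sum_add_distrib,
      Finset.mul_sum]
    apply Finset.sum_congr rfl
    intro β _
    ring
  rw [hR]
  exact Finset.sum_congr rfl fun β _ => hL β
end
end

section
/- Let ρ be a density operator on ℂ^d with spectral decomposition ρ = Σ_i α_i|i⟩⟨i|, let S be the symmetric projector on ℂ^d ⊗ ℂ^d, and let S̃ = S/Tr(S) be the normalized maximally mixed symmetric state. Then the operator ω = S(ρ⊗ρ)S + (1 − Tr(S(ρ⊗ρ)S)) S̃ is a convex combination of operators of the form |ψ⟩⟨ψ|^{⊗2} with ψ a unit vector in ℂ^d. -/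
open Matrix BigOperators
open scoped Kronecker ComplexConjugate

noncomputable section

/- ### Auxiliary machinery -/

def zeta (k : Fin 4) : ℂ := Complex.I ^ (k : ℕ)

lemma sum_phase (e f : ℕ) (he : e ≤ 2) (hf : f ≤ 2) :
    ∑ w : Fin 4, zeta w ^ e * (conj (zeta w)) ^ f = if e = f then 4 else 0 := by
  have h0 : ((0 : Fin 4) : ℕ) = 0 := rfl
  have h1 : ((1 : Fin 4) : ℕ) = 1 := rfl
  have h2 : ((2 : Fin 4) : ℕ) = 2 := rfl
  have h3 : ((3 : Fin 4) : ℕ) = 3 := rfl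
  interval_cases e <;> interval_cases f <;>
    simp only [zeta, Fin.sum_univ_four, h0, h1, h2, h3, map_pow, Complex.conj_I, pow_zero,
      pow_one, pow_succ] <;>
    simp [Complex.ext_iff] <;> ring_nf

lemma G {d : ℕ} (i j k l : Fin d) :
    ∑ z : Fin d → Fin 4, zeta (z i) * zeta (z j) * conj (zeta (z k)) * conj (zeta (z l))
      = if (i = k ∧ j = l) ∨ (i = l ∧ j = k) then (4 : ℂ) ^ d else 0 := by
  classical
  set a : Fin d → ℕ := fun m => (if m = i then 1 else 0) + (if m = j then 1 else 0) with ha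
  set b : Fin d → ℕ := fun m => (if m = k then 1 else 0) + (if m = l then 1 else 0) with hb
  have key : ∀ z : Fin d → Fin 4,
      zeta (z i) * zeta (z j) * conj (zeta (z k)) * conj (zeta (z l))
        = ∏ m, (zeta (z m) ^ a m * (conj (zeta (z m))) ^ b m) := by
    intro z
    rw [Finset.prod_mul_distrib]
    have e1 : ∀ m, zeta (z m) ^ a m = (if m = i then zeta (z m) else 1) * (if m = j then zeta (z m) else 1) := by
      intro m; simp only [ha, pow_add]; congr 1 <;> split <;> simp
    have e2 : ∀ m, (conj (zeta (z m))) ^ b m = (if m = k then conj (zeta (z m)) else 1) * (if m = l then conj (zeta (z m)) else 1) := by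
      intro m; simp only [hb, pow_add]; congr 1 <;> split <;> simp
    simp only [e1, e2, Finset.prod_mul_distrib, Finset.prod_ite_eq', Finset.mem_univ, if_true]
    ring
  simp only [key]
  have hps := Finset.prod_univ_sum (κ := fun _ : Fin d => Fin 4)
    (t := fun _ : Fin d => (Finset.univ : Finset (Fin 4)))
    (f := fun m w => zeta w ^ a m * (conj (zeta w)) ^ b m)
  rw [← Fintype.piFinset_univ, ← hps]
  have step : ∀ m, (∑ w : Fin 4, zeta w ^ a m * (conj (zeta w)) ^ b m) = if a m = b m then 4 else 0 := by
    intro m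
    apply sum_phase <;> simp only [ha, hb] <;> split <;> split <;> norm_num
  simp only [step]
  by_cases h : ∀ m, a m = b m
  · simp only [h, if_true]
    rw [if_pos, Finset.prod_const, Finset.card_univ, Fintype.card_fin]
    have hi := h i
    have hj := h j
    simp only [ha, hb, if_pos rfl] at hi hj
    by_cases hik : i = k <;> by_cases hil : i = l <;> by_cases hjk : j = k <;> by_cases hjl : j = l <;>
      simp_all
  · push_neg at h
    obtain ⟨m, hm⟩ := h
    rw [Finset.prod_eq_zero (Finset.mem_univ m) (by simp [hm]), if_neg]
    rintro (⟨h1, h2⟩ | ⟨h1, h2⟩) <;> subst h1 <;> subst h2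
    · exact hm rfl
    · exact hm (by simp only [ha, hb]; ring)

lemma swap_mul {I : Type*} [DecidableEq I] [Fintype I] (M : Matrix (I × I) (I × I) ℂ)
    (p q : I × I) : (swapMat I * M) p q = M (p.2, p.1) q := by
  rw [Matrix.mul_apply]
  rw [Finset.sum_eq_single (p.2, p.1)]
  · simp [swapMat]
  · intro r _ hr
    rw [swapMat]
    simp only [ite_mul, one_mul, zero_mul, ite_eq_right_iff]
    rintro ⟨h1, h2⟩
    exact absurd (Prod.ext h2.symm h1.symm) hr
  · simp

lemma mul_swap {I : Type*} [DecidableEq I] [Fintype I] (M : Matrix (I × I) (I × I) ℂ)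
    (p q : I × I) : (M * swapMat I) p q = M p (q.2, q.1) := by
  rw [Matrix.mul_apply]
  rw [Finset.sum_eq_single (q.2, q.1)]
  · simp [swapMat]
  · intro r _ hr
    rw [swapMat]
    simp only [mul_ite, mul_one, mul_zero, ite_eq_right_iff]
    rintro ⟨h1, h2⟩
    exact absurd (Prod.ext h1 h2) hr
  · simp

lemma SMS_apply {I : Type*} [DecidableEq I] [Fintype I] (M : Matrix (I × I) (I × I) ℂ)
    (a b a' b' : I) :
    (symProj I * M * symProj I) (a, b) (a', b')
      = (4⁻¹ : ℂ) * (M (a, b) (a', b') + M (a, b) (b', a') + M (b, a) (a', b') + M (b, a) (b', a')) := by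
  simp only [symProj, Matrix.smul_mul, Matrix.mul_smul, Matrix.add_mul, Matrix.mul_add,
    Matrix.smul_apply, Matrix.add_apply, Matrix.one_mul, Matrix.mul_one, smul_eq_mul,
    swap_mul, mul_swap]
  ring

lemma swap_mul_swap {I : Type*} [DecidableEq I] [Fintype I] :
    swapMat I * swapMat I = 1 := by
  ext p q
  rw [swap_mul]
  simp only [swapMat, Matrix.one_apply, Prod.ext_iff]
  aesop

lemma symProj_mul_symProj {I : Type*} [DecidableEq I] [Fintype I] :
    symProj I * symProj I = symProj I := by
  simp only [symProj, Matrix.smul_mul, Matrix.mul_smul, Matrix.add_mul, Matrix.mul_add,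
    Matrix.one_mul, Matrix.mul_one, swap_mul_swap, smul_smul]
  rw [smul_add]
  module

lemma ite_or_helper (A B : Prop) [Decidable A] [Decidable B] (x y : ℂ) :
    (if A ∨ B then x else 0) * y
      = (if A then x else 0) * y + (if B then x else 0) * y - (if A ∧ B then x else 0) * y := by
  by_cases hA : A <;> by_cases hB : B <;> simp [hA, hB]

lemma master {d : ℕ} (c : Fin d → ℝ) (v : Fin d → Fin d → ℂ)
    (ρ : Matrix (Fin d) (Fin d) ℂ)
    (hρ : ∀ x y, ρ x y = ∑ i, (c i : ℂ) ^ 2 * v i x * conj (v i y)) :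
    symProj (Fin d) * (ρ ⊗ₖ ρ) * symProj (Fin d)
      = (2⁻¹ * ((4 : ℂ) ^ d)⁻¹) •
          (∑ z : Fin d → Fin 4, pure2 (fun x => ∑ i, zeta (z i) * (c i : ℂ) * v i x))
        + (2⁻¹ : ℂ) • ∑ i, ((c i : ℂ) ^ 4) • pure2 (v i) := by
  ext ⟨a, b⟩ ⟨a', b'⟩
  rw [SMS_apply]
  set F : Fin d → Fin d → Fin d → Fin d → ℂ := fun i j k l =>
    ((c i : ℂ) * c j * c k * c l) * (v i a * v j b * conj (v k a') * conj (v l b')) with hF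
  have hexp : ∀ z : Fin d → Fin 4,
      pure2 (fun x => ∑ i, zeta (z i) * (c i : ℂ) * v i x) (a, b) (a', b')
        = ∑ l, ∑ k, ∑ j, ∑ i,
            (zeta (z i) * zeta (z j) * conj (zeta (z k)) * conj (zeta (z l))) * F i j k l := by
    intro z
    simp only [pure2, outer, vec2, _root_.map_mul, map_sum, Finset.sum_mul, Finset.mul_sum, hF,
      Complex.conj_ofReal]
    refine Finset.sum_congr rfl fun l _ => Finset.sum_congr rfl fun k _ =>
      Finset.sum_congr rfl fun j _ => Finset.sum_congr rfl fun i _ => by ring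
  have hsum : ∑ z : Fin d → Fin 4,
      pure2 (fun x => ∑ i, zeta (z i) * (c i : ℂ) * v i x) (a, b) (a', b')
        = (4 : ℂ) ^ d * ((∑ l, ∑ k, F k l k l) + (∑ l, ∑ k, F l k k l) - (∑ l, F l l l l)) := by
    rw [Finset.sum_congr rfl fun z _ => hexp z]
    rw [Finset.sum_comm]
    have : ∀ l : Fin d, ∑ z : Fin d → Fin 4, ∑ k, ∑ j, ∑ i,
        (zeta (z i) * zeta (z j) * conj (zeta (z k)) * conj (zeta (z l))) * F i j k l
        = ∑ k, ∑ j, ∑ i,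
            (if (i = k ∧ j = l) ∨ (i = l ∧ j = k) then (4 : ℂ) ^ d else 0) * F i j k l := by
      intro l
      rw [Finset.sum_comm]
      refine Finset.sum_congr rfl fun k _ => ?_
      rw [Finset.sum_comm]
      refine Finset.sum_congr rfl fun j _ => ?_
      rw [Finset.sum_comm]
      refine Finset.sum_congr rfl fun i _ => ?_
      rw [← Finset.sum_mul, G i j k l]
    rw [Finset.sum_congr rfl fun l _ => this l]
    simp only [ite_or_helper]
    simp only [Finset.sum_add_distrib, Finset.sum_sub_distrib, ite_and, ite_mul, zero_mul,
      Finset.sum_ite_eq, Finset.sum_ite_eq', Finset.mem_univ, if_true]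
    simp only [mul_sub, mul_add, Finset.mul_sum]
  simp only [Matrix.add_apply, Matrix.smul_apply, Matrix.sum_apply, smul_eq_mul, hsum]
  have e1 : (ρ ⊗ₖ ρ) (a, b) (a', b') = ∑ l, ∑ k, F k l k l := by
    simp only [Matrix.kroneckerMap_apply, hρ, Finset.sum_mul_sum, hF]
    rw [Finset.sum_comm]
    exact Finset.sum_congr rfl fun l _ => Finset.sum_congr rfl fun k _ => by ring
  have e2 : (ρ ⊗ₖ ρ) (a, b) (b', a') = ∑ l, ∑ k, F l k k l := by
    simp only [Matrix.kroneckerMap_apply, hρ, Finset.sum_mul_sum, hF]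
    exact Finset.sum_congr rfl fun l _ => Finset.sum_congr rfl fun k _ => by ring
  have e3 : (ρ ⊗ₖ ρ) (b, a) (a', b') = ∑ l, ∑ k, F l k k l := by
    simp only [Matrix.kroneckerMap_apply, hρ, Finset.sum_mul_sum, hF]
    rw [Finset.sum_comm]
    exact Finset.sum_congr rfl fun l _ => Finset.sum_congr rfl fun k _ => by ring
  have e4 : (ρ ⊗ₖ ρ) (b, a) (b', a') = ∑ l, ∑ k, F k l k l := by
    simp only [Matrix.kroneckerMap_apply, hρ, Finset.sum_mul_sum, hF]
    exact Finset.sum_congr rfl fun l _ => Finset.sum_congr rfl fun k _ => by ring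
  have e5 : ∑ i, (c i : ℂ) ^ 4 * pure2 (v i) (a, b) (a', b') = ∑ l, F l l l l := by
    refine Finset.sum_congr rfl fun i _ => ?_
    simp only [pure2, outer, vec2, _root_.map_mul, hF]
    ring
  rw [e1, e2, e3, e4, e5]
  have h4 : ((4 : ℂ) ^ d) ≠ 0 := pow_ne_zero _ (by norm_num)
  field_simp
  ring

lemma zeta_mul_conj (k : Fin 4) : zeta k * conj (zeta k) = 1 := by
  rw [Complex.mul_conj]
  norm_cast
  simp [zeta, map_pow]

lemma unitVec_iff {I : Type*} [Fintype I] (ψ : I → ℂ) :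
    unitVec ψ ↔ ∑ i, ψ i * conj (ψ i) = 1 := by
  rw [unitVec]
  rw [show ∑ i, ψ i * conj (ψ i) = ((∑ i, Complex.normSq (ψ i) : ℝ) : ℂ) by
    push_cast
    exact Finset.sum_congr rfl fun i _ => (Complex.mul_conj _)]
  constructor
  · intro h; rw [h]; norm_num
  · intro h; exact_mod_cast h

lemma unitVec_of {d : ℕ} (c : Fin d → ℝ) (v : Fin d → Fin d → ℂ)
    (horth : ∀ i j, ∑ a, v i a * conj (v j a) = if i = j then 1 else 0)
    (hc : ∑ i, (c i) ^ 2 = 1) (z : Fin d → Fin 4) :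
    unitVec (fun x => ∑ i, zeta (z i) * (c i : ℂ) * v i x) := by
  rw [unitVec_iff]
  have h1 : ∀ a : Fin d, (∑ i, zeta (z i) * (c i : ℂ) * v i a) * conj (∑ j, zeta (z j) * (c j : ℂ) * v j a)
      = ∑ i, ∑ j, (zeta (z i) * conj (zeta (z j)) * (c i : ℂ) * (c j : ℂ)) * (v i a * conj (v j a)) := by
    intro a
    rw [map_sum, Finset.sum_mul_sum]
    exact Finset.sum_congr rfl fun i _ => Finset.sum_congr rfl fun j _ => by
      simp only [_root_.map_mul, Complex.conj_ofReal]; ring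
  simp only [h1]
  rw [Finset.sum_comm]
  have h2 : ∀ i : Fin d, ∑ a, ∑ j, (zeta (z i) * conj (zeta (z j)) * (c i : ℂ) * (c j : ℂ)) * (v i a * conj (v j a))
      = (c i : ℂ) ^ 2 := by
    intro i
    rw [Finset.sum_comm]
    rw [Finset.sum_congr rfl fun j _ => by rw [← Finset.mul_sum, horth i j]]
    simp only [mul_ite, mul_one, mul_zero, Finset.sum_ite_eq, Finset.mem_univ, if_true]
    rw [show zeta (z i) * conj (zeta (z i)) * (c i : ℂ) * (c i : ℂ)
        = (zeta (z i) * conj (zeta (z i))) * ((c i : ℂ) * (c i : ℂ)) by ring, zeta_mul_conj]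
    ring
  simp only [h2]
  rw [show ∑ x, ((c x : ℂ)) ^ 2 = ((∑ x, (c x) ^ 2 : ℝ) : ℂ) by push_cast; rfl, hc]
  norm_num

lemma trace_pure2 {I : Type*} [Fintype I] {ψ : I → ℂ} (h : unitVec ψ) :
    (pure2 ψ).trace = 1 := by
  rw [unitVec_iff] at h
  rw [Matrix.trace]
  simp only [Matrix.diag_apply, pure2, outer, vec2]
  calc ∑ p : I × I, (ψ p.1 * ψ p.2) * conj (ψ p.1 * ψ p.2)
      = ∑ a, ∑ b, (ψ a * conj (ψ a)) * (ψ b * conj (ψ b)) := by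
        rw [Fintype.sum_prod_type]
        exact Finset.sum_congr rfl fun a _ => Finset.sum_congr rfl fun b _ => by
          simp only [_root_.map_mul]; ring
    _ = 1 := by rw [← Finset.sum_mul_sum, h, one_mul]

lemma trace_symProj {d : ℕ} :
    (symProj (Fin d)).trace = ((((d : ℝ) ^ 2 + d) / 2 : ℝ) : ℂ) := by
  rw [Matrix.trace]
  simp only [symProj, Matrix.diag_apply, Matrix.smul_apply, Matrix.add_apply, Matrix.one_apply_eq,
    swapMat, smul_eq_mul]
  have hiff : ∀ p : Fin d × Fin d, ((p.1 = p.2 ∧ p.2 = p.1) ↔ p.1 = p.2) :=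
    fun p => ⟨fun h => h.1, fun h => ⟨h, h.symm⟩⟩
  simp only [hiff]
  rw [Fintype.sum_prod_type]
  simp only [mul_add, mul_one, Finset.sum_add_distrib, mul_ite, mul_zero, Finset.sum_ite_eq,
    Finset.mem_univ, if_true, Finset.sum_const, Finset.card_univ, Fintype.card_fin, nsmul_eq_mul]
  push_cast
  ring

lemma rsmul {m n : Type*} (r : ℝ) (M : Matrix m n ℂ) : r • M = ((r : ℂ)) • M := by
  ext i j
  simp [Matrix.smul_apply, Complex.real_smul]

set_option maxHeartbeats 1600000 in
open scoped ComplexOrder in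
theorem stmt_5 (d : ℕ) (ρ : Matrix (Fin d) (Fin d) ℂ)
    (hpsd : ρ.PosSemidef) (htr : ρ.trace = 1)
    (ω : Matrix (Fin d × Fin d) (Fin d × Fin d) ℂ)
    (hω : ω = symProj (Fin d) * (ρ ⊗ₖ ρ) * symProj (Fin d) +
        (1 - (symProj (Fin d) * (ρ ⊗ₖ ρ) * symProj (Fin d)).trace) •
          ((symProj (Fin d)).trace⁻¹ • symProj (Fin d))) :
    ω ∈ convexHull ℝ {M : Matrix (Fin d × Fin d) (Fin d × Fin d) ℂ |
      ∃ ψ : Fin d → ℂ, unitVec ψ ∧ M = pure2 ψ} := by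
  classical
  have hd : 0 < d := by
    by_contra h
    push_neg at h
    interval_cases d
    simp [Matrix.trace] at htr
  have hherm := hpsd.1
  set α : Fin d → ℝ := hherm.eigenvalues with hα
  set U : Matrix (Fin d) (Fin d) ℂ := (hherm.eigenvectorUnitary : Matrix (Fin d) (Fin d) ℂ) with hU
  have hα0 : ∀ i, 0 ≤ α i := fun i => hpsd.eigenvalues_nonneg i
  have hα1 : ∑ i, α i = 1 := by
    have hsp : ρ.trace = ∑ i, ((α i : ℝ) : ℂ) := by
      conv_lhs => rw [hherm.spectral_theorem, Unitary.conjStarAlgAut_apply]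
      rw [Matrix.trace_mul_cycle]
      rw [(Matrix.mem_unitaryGroup_iff').mp hherm.eigenvectorUnitary.2, Matrix.one_mul,
        Matrix.trace_diagonal]
      rfl
    rw [htr] at hsp
    exact_mod_cast hsp.symm
  have horth : ∀ i j, ∑ a, U a i * conj (U a j) = if i = j then 1 else 0 := by
    intro i j
    have h1 : (star U * U) = 1 := by
      rw [hU]
      exact (Matrix.mem_unitaryGroup_iff').mp hherm.eigenvectorUnitary.2
    have h2 := congrFun (congrFun h1 j) i
    rw [Matrix.mul_apply] at h2
    simp only [Matrix.star_apply, Matrix.one_apply] at h2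
    rw [Finset.sum_congr rfl (fun a _ => show U a i * conj (U a j) = star (U a j) * U a i by
      rw [RCLike.star_def]; ring), h2]
    simp [eq_comm]
  set cα : Fin d → ℝ := fun i => Real.sqrt (α i) with hcα
  set vα : Fin d → Fin d → ℂ := fun i a => U a i with hvα
  have hρent : ∀ x y, ρ x y = ∑ i, ((cα i : ℝ) : ℂ) ^ 2 * vα i x * conj (vα i y) := by
    intro x y
    conv_lhs => rw [hherm.spectral_theorem, Unitary.conjStarAlgAut_apply]
    rw [Matrix.mul_apply]
    refine Finset.sum_congr rfl fun i _ => ?_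
    rw [Matrix.mul_apply, Finset.sum_eq_single i]
    · simp only [Matrix.diagonal_apply_eq, Function.comp_apply, Matrix.star_apply, RCLike.star_def]
      rw [show (((cα i : ℝ)) : ℂ) ^ 2 = ((α i : ℝ) : ℂ) by
        rw [← Complex.ofReal_pow, hcα, Real.sq_sqrt (hα0 i)]]
      show U x i * ((α i : ℝ) : ℂ) * conj (U y i) = ((α i : ℝ) : ℂ) * vα i x * conj (vα i y)
      rw [hvα]
      ring
    · intro b _ hb
      simp [Matrix.diagonal_apply_ne _ hb]
    · simp
  have hM := master cα vα ρ hρent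
  -- the standard basis
  set e : Fin d → Fin d → ℂ := fun i a => if a = i then 1 else 0 with he
  set c0 : Fin d → ℝ := fun _ => (Real.sqrt d)⁻¹ with hc0def
  have hc0sq : ∀ i : Fin d, (c0 i) ^ 2 = (d : ℝ)⁻¹ := by
    intro i
    rw [hc0def, inv_pow, Real.sq_sqrt (by positivity)]
  have horth0 : ∀ i j, ∑ a, e i a * conj (e j a) = if i = j then 1 else 0 := by
    intro i j
    rw [Finset.sum_congr rfl (fun a _ => show e i a * conj (e j a)
        = if a = i then (if a = j then 1 else 0) else 0 by
      by_cases hai : a = i <;> by_cases haj : a = j <;> simp [he, hai, haj])]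
    rw [Finset.sum_ite_eq' Finset.univ i (fun a => if a = j then (1 : ℂ) else 0)]
    simp
  have hρ0 : ∀ x y, (((d : ℂ)⁻¹) • (1 : Matrix (Fin d) (Fin d) ℂ)) x y
      = ∑ i, ((c0 i : ℝ) : ℂ) ^ 2 * e i x * conj (e i y) := by
    intro x y
    have hcast : ∀ i : Fin d, (((c0 i : ℝ)) : ℂ) ^ 2 = (d : ℂ)⁻¹ := by
      intro i
      rw [← Complex.ofReal_pow, hc0sq i]
      push_cast
      rfl
    rw [Finset.sum_congr rfl (fun i _ => show ((c0 i : ℝ) : ℂ) ^ 2 * e i x * conj (e i y)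
        = if x = i then (if y = i then (d : ℂ)⁻¹ else 0) else 0 by
      by_cases h1 : x = i <;> by_cases h2 : y = i <;> simp [he, h1, h2, hcast i])]
    rw [Finset.sum_ite_eq Finset.univ x (fun i => if y = i then (d : ℂ)⁻¹ else 0)]
    simp only [Matrix.smul_apply, Matrix.one_apply, smul_eq_mul, Finset.mem_univ, if_true]
    by_cases hxy : x = y
    · subst hxy; simp
    · simp [hxy, (show ¬ y = x from fun h => hxy h.symm)]
  have hM0 := master c0 e (((d : ℂ)⁻¹) • (1 : Matrix (Fin d) (Fin d) ℂ)) hρ0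
  have hdC : (d : ℂ) ≠ 0 := Nat.cast_ne_zero.mpr hd.ne'
  have hSk : symProj (Fin d) * ((((d : ℂ)⁻¹) • (1 : Matrix (Fin d) (Fin d) ℂ)) ⊗ₖ
        (((d : ℂ)⁻¹) • (1 : Matrix (Fin d) (Fin d) ℂ))) * symProj (Fin d)
      = ((d : ℂ)⁻¹ * (d : ℂ)⁻¹) • symProj (Fin d) := by
    rw [Matrix.smul_kronecker, Matrix.kronecker_smul, Matrix.one_kronecker_one, smul_smul,
      Matrix.mul_smul, Matrix.mul_one, Matrix.smul_mul, symProj_mul_symProj]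
  rw [hSk] at hM0
  have hS : symProj (Fin d)
      = (d : ℂ) ^ 2 • ((2⁻¹ * ((4 : ℂ) ^ d)⁻¹) •
          (∑ z : Fin d → Fin 4, pure2 (fun x => ∑ i, zeta (z i) * (c0 i : ℂ) * e i x))
        + (2⁻¹ : ℂ) • ∑ i, ((c0 i : ℂ) ^ 4) • pure2 (e i)) := by
    rw [← hM0, smul_smul, show ((d : ℂ) ^ 2 * ((d : ℂ)⁻¹ * (d : ℂ)⁻¹)) = 1 by field_simp,
      one_smul]
  -- unit vectors
  have hcsum : ∑ i, (cα i) ^ 2 = 1 := by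
    rw [Finset.sum_congr rfl fun i _ => by rw [hcα, Real.sq_sqrt (hα0 i)]]
    exact hα1
  have hc0sum : ∑ i : Fin d, (c0 i) ^ 2 = 1 := by
    rw [Finset.sum_congr rfl fun i _ => hc0sq i]
    rw [Finset.sum_const, Finset.card_univ, Fintype.card_fin, nsmul_eq_mul]
    field_simp
  have uψ : ∀ z : Fin d → Fin 4, unitVec (fun x => ∑ i, zeta (z i) * (cα i : ℂ) * vα i x) :=
    fun z => unitVec_of cα vα horth hcsum z
  have uχ : ∀ z : Fin d → Fin 4, unitVec (fun x => ∑ i, zeta (z i) * (c0 i : ℂ) * e i x) :=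
    fun z => unitVec_of c0 e horth0 hc0sum z
  have uv : ∀ i, unitVec (vα i) := by
    intro i
    rw [unitVec_iff]
    exact (horth i i).trans (if_pos rfl)
  have ue : ∀ i, unitVec (e i) := by
    intro i
    rw [unitVec_iff]
    exact (horth0 i i).trans (if_pos rfl)
  -- trace computation
  set p : ℝ := ∑ i, (α i) ^ 2 with hpdef
  have hc4 : ∀ i, ((cα i : ℂ)) ^ 4 = (((α i) ^ 2 : ℝ) : ℂ) := by
    intro i
    rw [← Complex.ofReal_pow]
    congr 1
    simp only [hcα]
    rw [show (Real.sqrt (α i)) ^ 4 = ((Real.sqrt (α i)) ^ 2) ^ 2 by ring,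
      Real.sq_sqrt (hα0 i)]
  have hcard : Fintype.card (Fin d → Fin 4) = 4 ^ d := by
    simp [Fintype.card_fun]
  have hpt : (symProj (Fin d) * (ρ ⊗ₖ ρ) * symProj (Fin d)).trace = (((1 + p) / 2 : ℝ) : ℂ) := by
    rw [hM, Matrix.trace_add, Matrix.trace_smul, Matrix.trace_smul, Matrix.trace_sum,
      Matrix.trace_sum]
    have hz1 : ∀ z : Fin d → Fin 4,
        (pure2 (fun x => ∑ i, zeta (z i) * (cα i : ℂ) * vα i x)).trace = (1 : ℂ) :=
      fun z => trace_pure2 (uψ z)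
    rw [Finset.sum_congr rfl fun z _ => hz1 z]
    have hz2 : ∀ i : Fin d, (((cα i : ℂ)) ^ 4 • pure2 (vα i)).trace = (((α i) ^ 2 : ℝ) : ℂ) := by
      intro i
      rw [Matrix.trace_smul, trace_pure2 (uv i), smul_eq_mul, mul_one, hc4 i]
    rw [Finset.sum_congr rfl fun i _ => hz2 i]
    rw [Finset.sum_const, Finset.card_univ, hcard, nsmul_eq_mul,
      show ∑ i, (((α i) ^ 2 : ℝ) : ℂ) = ((p : ℝ) : ℂ) by rw [hpdef]; push_cast; rfl]
    have h4 : ((4 : ℂ) ^ d) ≠ 0 := pow_ne_zero _ (by norm_num)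
    push_cast
    field_simp
    ring
    rw [inv_pow, inv_mul_cancel₀ h4]
  have hp0 : 0 ≤ p := Finset.sum_nonneg fun i _ => sq_nonneg _
  have hp1 : p ≤ 1 := by
    rw [hpdef, ← hα1]
    refine Finset.sum_le_sum fun i _ => ?_
    have hle : α i ≤ 1 := by
      rw [← hα1]
      exact Finset.single_le_sum (fun j _ => hα0 j) (Finset.mem_univ i)
    nlinarith [hα0 i]
  set t : ℝ := (1 + p) / 2 with htdef
  have h1t : 0 ≤ 1 - t := by rw [htdef]; linarith
  -- the convex combination
  set w : ((Fin d → Fin 4) ⊕ Fin d) ⊕ ((Fin d → Fin 4) ⊕ Fin d) → ℝ :=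
    Sum.elim
      (Sum.elim (fun _ => 2⁻¹ * ((4 : ℝ) ^ d)⁻¹) (fun i => (α i) ^ 2 / 2))
      (Sum.elim (fun _ => (1 - t) * ((d : ℝ) / (d + 1)) * ((4 : ℝ) ^ d)⁻¹)
        (fun _ => (1 - t) / ((d : ℝ) ^ 2 + d))) with hwdef
  set pts : ((Fin d → Fin 4) ⊕ Fin d) ⊕ ((Fin d → Fin 4) ⊕ Fin d) →
      Matrix (Fin d × Fin d) (Fin d × Fin d) ℂ :=
    Sum.elim
      (Sum.elim (fun z => pure2 (fun x => ∑ i, zeta (z i) * (cα i : ℂ) * vα i x))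
        (fun i => pure2 (vα i)))
      (Sum.elim (fun z => pure2 (fun x => ∑ i, zeta (z i) * (c0 i : ℂ) * e i x))
        (fun i => pure2 (e i))) with hptsdef
  have hdR : (0 : ℝ) < d := by exact_mod_cast hd
  have h4R : ((4 : ℝ) ^ d) ≠ 0 := pow_ne_zero _ (by norm_num)
  have hw0 : ∀ k, 0 ≤ w k := by
    rintro ((z | i) | (z | i)) <;> simp only [hwdef, Sum.elim_inl, Sum.elim_inr] <;> positivity
  have hw1 : ∑ k, w k = 1 := by
    simp only [Fintype.sum_sum_type, hwdef, Sum.elim_inl, Sum.elim_inr, Finset.sum_const,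
      Finset.card_univ, hcard, Fintype.card_fin, nsmul_eq_mul]
    rw [show ∑ i, (α i) ^ 2 / 2 = p / 2 by rw [hpdef, Finset.sum_div]]
    push_cast
    rw [htdef]
    field_simp
    ring
  have hmem : ∀ k, pts k ∈ {M : Matrix (Fin d × Fin d) (Fin d × Fin d) ℂ |
      ∃ ψ : Fin d → ℂ, unitVec ψ ∧ M = pure2 ψ} := by
    rintro ((z | i) | (z | i)) <;> simp only [hptsdef, Sum.elim_inl, Sum.elim_inr]
    · exact ⟨_, uψ z, rfl⟩
    · exact ⟨_, uv i, rfl⟩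
    · exact ⟨_, uχ z, rfl⟩
    · exact ⟨_, ue i, rfl⟩
  have hωsum : ω = ∑ k, w k • pts k := by
    rw [hω, hpt, trace_symProj, hM, hS]
    simp only [Fintype.sum_sum_type, hwdef, hptsdef, Sum.elim_inl, Sum.elim_inr]
    simp only [smul_add, smul_smul]
    congr 1
    · congr 1
      · rw [Finset.smul_sum]
        refine Finset.sum_congr rfl fun z _ => ?_
        rw [rsmul]
        congr 1
        push_cast
        ring
      · rw [Finset.smul_sum]
        refine Finset.sum_congr rfl fun i _ => ?_
        rw [smul_smul, rsmul, hc4 i]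
        congr 1
        push_cast
        ring
    · congr 1
      · rw [Finset.smul_sum]
        refine Finset.sum_congr rfl fun z _ => ?_
        rw [rsmul]
        congr 1
        push_cast
        field_simp
      · rw [Finset.smul_sum]
        refine Finset.sum_congr rfl fun i _ => ?_
        rw [smul_smul, rsmul, show ((c0 i : ℂ)) ^ 4 = ((d : ℂ) ^ 2)⁻¹ by
          rw [← Complex.ofReal_pow, hc0def, show ((Real.sqrt d)⁻¹) ^ 4 = (((Real.sqrt d) ^ 2) ^ 2)⁻¹ by
            rw [inv_pow]; ring_nf, Real.sq_sqrt hdR.le]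
          push_cast
          ring]
        congr 1
        push_cast
        field_simp
  rw [hωsum, ← Finset.centerMass_eq_of_sum_1 Finset.univ pts hw1]
  exact Finset.centerMass_mem_convexHull Finset.univ (fun k _ => hw0 k)
    (by rw [hw1]; norm_num) (fun k _ => hmem k)
end
end

section
/- With the ⋆-product F_A ⋆ F_B = F_A ⊗ F_B + (Tr F_A / Tr S_A)(Tr F_B / Tr S_B) A_A ⊗ A_B, for all unit vectors ψ ∈ ℂ^{d_A}, φ ∈ ℂ^{d_B} and all Hermitian F_A on (ℂ^{d_A})^{⊗2}, F_B on (ℂ^{d_B})^{⊗2}: Tr((F_A ⋆ F_B)(|ψ⟩⟨ψ|^{⊗2} ⊗ |φ⟩⟨φ|^{⊗2})) = Tr(F_A |ψ⟩⟨ψ|^{⊗2}) · Tr(F_B |φ⟩⟨φ|^{⊗2}). -/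
open Matrix BigOperators
open scoped Kronecker ComplexConjugate

noncomputable section

/-- the ⋆-product of the toy theory -/
def starProd {dA dB : ℕ} (FA : Matrix (Fin dA × Fin dA) (Fin dA × Fin dA) ℂ)
    (FB : Matrix (Fin dB × Fin dB) (Fin dB × Fin dB) ℂ) :
    Matrix ((Fin dA × Fin dA) × (Fin dB × Fin dB)) ((Fin dA × Fin dA) × (Fin dB × Fin dB)) ℂ :=
  FA ⊗ₖ FB + ((FA.trace / (symProj (Fin dA)).trace) * (FB.trace / (symProj (Fin dB)).trace)) •
    (asymProj (Fin dA) ⊗ₖ asymProj (Fin dB))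


lemma trace_swap_pure2 {I : Type*} [Fintype I] [DecidableEq I] (ψ : I → ℂ) :
    (swapMat I * pure2 ψ).trace = (pure2 ψ).trace := by
  unfold Matrix.trace swapMat pure2 outer vec2
  simp only [Matrix.mul_apply, Matrix.diag_apply]
  rw [Finset.sum_congr rfl]
  intro p _
  change ∑ q : I × I, (if p.1 = q.2 ∧ p.2 = q.1 then (1:ℂ) else 0) * (ψ q.1 * ψ q.2 * (starRingEnd ℂ) (ψ p.1 * ψ p.2)) = ψ p.1 * ψ p.2 * (starRingEnd ℂ) (ψ p.1 * ψ p.2)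
  have : ∀ q : I × I, ((if p.1 = q.2 ∧ p.2 = q.1 then (1:ℂ) else 0) *
      (ψ q.1 * ψ q.2 * (starRingEnd ℂ) (ψ p.1 * ψ p.2))) =
      (if q = (p.2, p.1) then (ψ q.1 * ψ q.2 * (starRingEnd ℂ) (ψ p.1 * ψ p.2)) else 0) := by
    intro q
    by_cases h : q = (p.2, p.1)
    · subst h; simp
    · have h2 : ¬ (p.1 = q.2 ∧ p.2 = q.1) := by
        rintro ⟨h1, h3⟩
        exact h (Prod.ext h3.symm h1.symm)
      simp [h, h2]
  rw [Finset.sum_congr rfl (fun q _ => this q), Finset.sum_ite_eq' _ ((p.2, p.1) : I × I)]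
  simp [mul_comm]

lemma trace_asym_pure2 {I : Type*} [Fintype I] [DecidableEq I] (ψ : I → ℂ) :
    (asymProj I * pure2 ψ).trace = 0 := by
  unfold asymProj
  rw [Matrix.smul_mul, Matrix.trace_smul, Matrix.sub_mul, Matrix.trace_sub, Matrix.one_mul,
    trace_swap_pure2, sub_self, smul_zero]

theorem stmt_10 (dA dB : ℕ)
    (FA : Matrix (Fin dA × Fin dA) (Fin dA × Fin dA) ℂ) (hFA : FA.IsHermitian)
    (FB : Matrix (Fin dB × Fin dB) (Fin dB × Fin dB) ℂ) (hFB : FB.IsHermitian)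
    (ψ : Fin dA → ℂ) (hψ : unitVec ψ) (φ : Fin dB → ℂ) (hφ : unitVec φ) :
    (starProd FA FB * (pure2 ψ ⊗ₖ pure2 φ)).trace =
      (FA * pure2 ψ).trace * (FB * pure2 φ).trace := by
  unfold starProd
  rw [Matrix.add_mul, Matrix.trace_add, Matrix.smul_mul, Matrix.trace_smul,
    ← Matrix.mul_kronecker_mul, ← Matrix.mul_kronecker_mul,
    Matrix.trace_kronecker, Matrix.trace_kronecker, trace_asym_pure2, zero_mul,
    smul_zero, add_zero]
end
end

section
/- For a unit vector ψ ∈ ℂ^{d_A} ⊗ ℂ^{d_B} with reduced density matrix ρ_A = Tr_B|ψ⟩⟨ψ|, the toy-model reduced state satisfies ω_A = S_A(ρ_A ⊗ ρ_A)S_A + (1 − Tr(S_A(ρ_A ⊗ ρ_A)S_A)) · S_A/Tr(S_A). In particular, using the spectral decomposition ρ_A = Σ_i α_i|i⟩⟨i|, the weight of the second term is Σ_{i<j} α_i α_j, which is strictly positive whenever ρ_A has rank ≥ 2. -/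
open Matrix BigOperators
open scoped Kronecker ComplexConjugate

noncomputable section

/-- the toy-model reduced state of a pure bipartite state -/
def toyReduced {dA dB : ℕ} (ψ : Fin dA × Fin dB → ℂ) :
    Matrix (Fin dA × Fin dA) (Fin dA × Fin dA) ℂ :=
  ptraceB (((1 : Matrix (Fin dA × Fin dA) (Fin dA × Fin dA) ℂ) ⊗ₖ symProj (Fin dB)) *
      reindexAB (pure2 ψ)) +
    (((asymProj (Fin dA) ⊗ₖ asymProj (Fin dB)) * reindexAB (pure2 ψ)).trace /
        (symProj (Fin dA)).trace) • symProj (Fin dA)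

/-! ### Auxiliary lemmas -/

lemma aux_L2 (d : ℕ) (ρ : Matrix (Fin d) (Fin d) ℂ) (a a' c c' : Fin d) :
    (symProj (Fin d) * (ρ ⊗ₖ ρ) * symProj (Fin d)) (a,a') (c,c') =
      2⁻¹ * (ρ a c * ρ a' c' + ρ a' c * ρ a c') := by
  simp [Matrix.mul_apply, symProj, swapMat, Matrix.one_apply, Fintype.sum_prod_type,
    Matrix.kroneckerMap_apply, Prod.mk.injEq, ite_and, mul_ite, ite_mul, mul_zero, zero_mul,
    Finset.sum_ite_eq, Finset.sum_ite_eq', mul_add, add_mul, Finset.sum_add_distrib, mul_comm]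
  ring

lemma aux_L1 (dA dB : ℕ) (ψ : Fin dA × Fin dB → ℂ) (a a' c c' : Fin dA) :
    ptraceB (((1 : Matrix (Fin dA × Fin dA) (Fin dA × Fin dA) ℂ) ⊗ₖ symProj (Fin dB)) *
      reindexAB (pure2 ψ)) (a,a') (c,c') =
      2⁻¹ * (ptraceB (outer ψ) a c * ptraceB (outer ψ) a' c' +
        ptraceB (outer ψ) a' c * ptraceB (outer ψ) a c') := by
  simp only [ptraceB, Matrix.mul_apply, Matrix.kroneckerMap_apply, Matrix.one_apply,
    symProj, swapMat, reindexAB, Matrix.submatrix_apply, reorder, Equiv.coe_fn_symm_mk,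
    pure2, outer, vec2, Matrix.smul_apply, Matrix.add_apply, Matrix.one_apply, smul_eq_mul,
    Fintype.sum_prod_type, Prod.mk.injEq, ite_and, mul_ite, ite_mul, mul_zero, zero_mul,
    Finset.sum_ite_eq, Finset.sum_ite_eq', Finset.mem_univ, if_true, mul_one, one_mul,
    mul_add, add_mul, Finset.sum_add_distrib, Finset.mul_sum, Finset.sum_mul]
  congr 1
  · rw [Finset.sum_comm]
    exact Finset.sum_congr rfl fun b _ => Finset.sum_congr rfl fun b' _ => by
      rw [_root_.map_mul]; ring
  · rw [Finset.sum_comm]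
    exact Finset.sum_congr rfl fun b _ => Finset.sum_congr rfl fun b' _ => by
      rw [_root_.map_mul]; ring

lemma inner_helper {B : Type*} [Fintype B] (c : ℂ) (t : B → B → ℂ) (X Y : B → ℂ)
    (h : ∀ b b', t b b' = c * (X b * Y b')) :
    ∑ b, ∑ b', t b b' = c * ((∑ b, X b) * (∑ b, Y b)) := by
  rw [Finset.sum_mul_sum, Finset.mul_sum]
  refine Finset.sum_congr rfl fun b _ => ?_
  rw [Finset.mul_sum]
  exact Finset.sum_congr rfl fun b' _ => h b b'

lemma aux_T1 (d : ℕ) (ρ : Matrix (Fin d) (Fin d) ℂ) :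
    (symProj (Fin d) * (ρ ⊗ₖ ρ) * symProj (Fin d)).trace =
      2⁻¹ * ((∑ a, ρ a a) * (∑ a, ρ a a) + ∑ a, ∑ a', ρ a a' * ρ a' a) := by
  rw [Matrix.trace]
  rw [show (Matrix.diag (symProj (Fin d) * (ρ ⊗ₖ ρ) * symProj (Fin d))) =
    fun p : Fin d × Fin d => (symProj (Fin d) * (ρ ⊗ₖ ρ) * symProj (Fin d)) (p.1,p.2) (p.1,p.2)
    from rfl]
  rw [Fintype.sum_prod_type]
  rw [Finset.sum_mul_sum, mul_add, Finset.mul_sum, Finset.mul_sum, ← Finset.sum_add_distrib]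
  refine Finset.sum_congr rfl fun a _ => ?_
  rw [Finset.mul_sum, Finset.mul_sum, ← Finset.sum_add_distrib]
  refine Finset.sum_congr rfl fun a' _ => ?_
  rw [aux_L2]; ring

lemma aux_T2 (dA dB : ℕ) (ψ : Fin dA × Fin dB → ℂ) :
    ((asymProj (Fin dA) ⊗ₖ asymProj (Fin dB)) * reindexAB (pure2 ψ)).trace =
      2⁻¹ * ((∑ a, ∑ a', (∑ b, ψ (a,b) * conj (ψ (a,b))) * (∑ b, ψ (a',b) * conj (ψ (a',b)))) -
        ∑ a, ∑ a', (∑ b, ψ (a,b) * conj (ψ (a',b))) * (∑ b, ψ (a',b) * conj (ψ (a,b)))) := by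
  conv_lhs =>
    simp only [Matrix.trace, Matrix.diag, Matrix.mul_apply, Matrix.kroneckerMap_apply,
      asymProj, swapMat, reindexAB, Matrix.submatrix_apply, reorder, Equiv.coe_fn_symm_mk,
      pure2, outer, vec2, Matrix.smul_apply, Matrix.sub_apply, Matrix.one_apply, smul_eq_mul,
      Fintype.sum_prod_type, Prod.mk.injEq, ite_and, mul_ite, ite_mul, mul_zero, zero_mul,
      Finset.sum_ite_eq, Finset.sum_ite_eq', Finset.mem_univ, if_true, mul_one, one_mul,
      sub_mul, mul_sub, Finset.sum_sub_distrib, Finset.mul_sum, Finset.sum_mul]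
  have h1 : ∀ a a' : Fin dA,
      (∑ b : Fin dB, ∑ b' : Fin dB,
        (2⁻¹ : ℂ) * 2⁻¹ * (ψ (a, b) * ψ (a', b') * conj (ψ (a, b) * ψ (a', b')))) =
      (4⁻¹ : ℂ) * ((∑ b, ψ (a,b) * conj (ψ (a,b))) * (∑ b, ψ (a',b) * conj (ψ (a',b)))) :=
    fun a a' => inner_helper _ _ _ _ (fun b b' => by rw [_root_.map_mul]; ring)
  have h2 : ∀ a a' : Fin dA,
      (∑ b : Fin dB, ∑ b' : Fin dB,
        (2⁻¹ : ℂ) * 2⁻¹ * (ψ (a', b) * ψ (a, b') * conj (ψ (a, b) * ψ (a', b')))) =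
      (4⁻¹ : ℂ) * ((∑ b, ψ (a',b) * conj (ψ (a,b))) * (∑ b, ψ (a,b) * conj (ψ (a',b)))) :=
    fun a a' => inner_helper _ _ _ _ (fun b b' => by rw [_root_.map_mul]; ring)
  have h3 : ∀ a a' : Fin dA,
      (∑ b : Fin dB, ∑ b' : Fin dB,
        (2⁻¹ : ℂ) * 2⁻¹ * (ψ (a, b') * ψ (a', b) * conj (ψ (a, b) * ψ (a', b')))) =
      (4⁻¹ : ℂ) * ((∑ b, ψ (a',b) * conj (ψ (a,b))) * (∑ b, ψ (a,b) * conj (ψ (a',b)))) :=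
    fun a a' => inner_helper _ _ _ _ (fun b b' => by rw [_root_.map_mul]; ring)
  have h4 : ∀ a a' : Fin dA,
      (∑ b : Fin dB, ∑ b' : Fin dB,
        (2⁻¹ : ℂ) * 2⁻¹ * (ψ (a', b') * ψ (a, b) * conj (ψ (a, b) * ψ (a', b')))) =
      (4⁻¹ : ℂ) * ((∑ b, ψ (a,b) * conj (ψ (a,b))) * (∑ b, ψ (a',b) * conj (ψ (a',b)))) :=
    fun a a' => inner_helper _ _ _ _ (fun b b' => by rw [_root_.map_mul]; ring)
  simp only [h1, h2, h3, h4]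
  simp only [← Finset.sum_sub_distrib]
  conv_rhs => rw [Finset.mul_sum]
  refine Finset.sum_congr rfl fun a _ => ?_
  rw [Finset.mul_sum]
  exact Finset.sum_congr rfl fun a' _ => by ring

lemma sum_swap4 {A I : Type*} [Fintype A] [Fintype I] (f : A → A → I → I → ℂ) :
    ∑ a, ∑ a', ∑ i, ∑ j, f a a' i j = ∑ i, ∑ j, ∑ a, ∑ a', f a a' i j :=
  calc ∑ a, ∑ a', ∑ i, ∑ j, f a a' i j
      = ∑ a, ∑ i, ∑ a', ∑ j, f a a' i j :=
        Finset.sum_congr rfl fun a _ => Finset.sum_comm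
    _ = ∑ i, ∑ a, ∑ a', ∑ j, f a a' i j := Finset.sum_comm
    _ = ∑ i, ∑ a, ∑ j, ∑ a', f a a' i j :=
        Finset.sum_congr rfl fun i _ => Finset.sum_congr rfl fun a _ => Finset.sum_comm
    _ = ∑ i, ∑ j, ∑ a, ∑ a', f a a' i j :=
        Finset.sum_congr rfl fun i _ => Finset.sum_comm

lemma pair_sum {d : ℕ} (β : Fin d → ℂ) :
    (∑ i, β i) * (∑ i, β i) =
      (∑ i, β i * β i) +
        2 * ∑ p ∈ Finset.univ.filter (fun p : Fin d × Fin d => p.1 < p.2), β p.1 * β p.2 := by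
  have ha := Finset.sum_filter_add_sum_filter_not (Finset.univ : Finset (Fin d × Fin d))
    (fun p => p.1 < p.2) (fun p => β p.1 * β p.2)
  have hb := Finset.sum_filter_add_sum_filter_not
    (Finset.univ.filter (fun p : Fin d × Fin d => ¬ p.1 < p.2))
    (fun p => p.2 < p.1) (fun p => β p.1 * β p.2)
  have hc : (Finset.univ.filter (fun p : Fin d × Fin d => ¬ p.1 < p.2)).filter
      (fun p => p.2 < p.1) = Finset.univ.filter (fun p : Fin d × Fin d => p.2 < p.1) := by
    rw [Finset.filter_filter]
    ext p
    simp only [Finset.mem_filter, Finset.mem_univ, true_and]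
    exact ⟨fun h => h.2, fun h => ⟨asymm h, h⟩⟩
  have hd : (Finset.univ.filter (fun p : Fin d × Fin d => ¬ p.1 < p.2)).filter
      (fun p => ¬ p.2 < p.1) = Finset.univ.filter (fun p : Fin d × Fin d => p.1 = p.2) := by
    rw [Finset.filter_filter]
    ext p
    simp only [Finset.mem_filter, Finset.mem_univ, true_and, not_lt]
    constructor
    · exact fun h => le_antisymm h.2 h.1
    · intro h; rw [h]; exact ⟨le_rfl, le_rfl⟩
  have hswap : ∑ p ∈ Finset.univ.filter (fun p : Fin d × Fin d => p.2 < p.1),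
      β p.1 * β p.2 =
      ∑ p ∈ Finset.univ.filter (fun p : Fin d × Fin d => p.1 < p.2), β p.1 * β p.2 := by
    refine Finset.sum_nbij' Prod.swap Prod.swap ?_ ?_ ?_ ?_ ?_
    · intro p hp
      simp only [Finset.mem_filter, Finset.mem_univ, true_and, Prod.fst_swap, Prod.snd_swap] at *
      exact hp
    · intro p hp
      simp only [Finset.mem_filter, Finset.mem_univ, true_and, Prod.fst_swap, Prod.snd_swap] at *
      exact hp
    · intro p _; exact Prod.swap_swap p
    · intro p _; exact Prod.swap_swap p
    · intro p _
      simp only [Prod.fst_swap, Prod.snd_swap]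
      exact mul_comm _ _
  have hdiag : ∑ p ∈ Finset.univ.filter (fun p : Fin d × Fin d => p.1 = p.2),
      β p.1 * β p.2 = ∑ i, β i * β i := by
    refine Finset.sum_nbij' Prod.fst (fun i => (i, i)) ?_ ?_ ?_ ?_ ?_
    · intro p _; exact Finset.mem_univ _
    · intro i _
      simp only [Finset.mem_filter, Finset.mem_univ, true_and]
    · rintro ⟨x, y⟩ h
      simp only [Finset.mem_filter, Finset.mem_univ, true_and] at h
      simp only [h]
    · intro i _; rfl
    · rintro ⟨x, y⟩ h
      simp only [Finset.mem_filter, Finset.mem_univ, true_and] at h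
      simp only [h]
  have hprod : (∑ i, β i) * (∑ i, β i) =
      ∑ p : Fin d × Fin d, β p.1 * β p.2 := by
    rw [Finset.sum_mul_sum, Fintype.sum_prod_type]
  rw [hprod, ← ha, ← hb, hc, hd, hswap, hdiag]
  ring

lemma rank_smul_outer_le_one {d : ℕ} (c : ℂ) (w : Fin d → ℂ) :
    (c • outer w).rank ≤ 1 := by
  have h : c • outer w = vecMulVec (fun i => c * w i) (fun j => conj (w j)) := by
    ext i j
    simp only [Matrix.smul_apply, outer, vecMulVec_apply, smul_eq_mul]
    ring
  have h2 := Matrix.rank_vecMulVec (fun i => c * w i) (fun j => conj (w j))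
  rw [h, Matrix.rank, ← Matrix.toLin'_apply']
  exact_mod_cast Module.finrank_le_of_rank_le (by exact_mod_cast h2)

theorem stmt_17 (dA dB : ℕ) (ψ : Fin dA × Fin dB → ℂ) (hψ : unitVec ψ)
    (ρA : Matrix (Fin dA) (Fin dA) ℂ) (hρ : ρA = ptraceB (outer ψ))
    (α : Fin dA → ℝ) (hα : ∀ i, 0 ≤ α i)
    (v : Fin dA → Fin dA → ℂ)
    (hortho : ∀ i j, (∑ x, conj (v i x) * v j x) = if i = j then 1 else 0)
    (hspec : ρA = ∑ i, (α i : ℂ) • outer (v i)) :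
    toyReduced ψ =
        symProj (Fin dA) * (ρA ⊗ₖ ρA) * symProj (Fin dA) +
          (1 - (symProj (Fin dA) * (ρA ⊗ₖ ρA) * symProj (Fin dA)).trace) •
            ((symProj (Fin dA)).trace⁻¹ • symProj (Fin dA)) ∧
      (1 - (symProj (Fin dA) * (ρA ⊗ₖ ρA) * symProj (Fin dA)).trace) =
        ∑ p ∈ Finset.univ.filter (fun p : Fin dA × Fin dA => p.1 < p.2),
          ((α p.1 : ℂ) * (α p.2 : ℂ)) ∧
      (2 ≤ ρA.rank →
        0 < (1 - (symProj (Fin dA) * (ρA ⊗ₖ ρA) * symProj (Fin dA)).trace).re) := by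
  have hρ' : ∀ a c, ρA a c = ∑ b, ψ (a,b) * conj (ψ (c,b)) := by
    intro a c; rw [hρ]; rfl
  -- trace of ρA is 1
  have hT1 : (∑ a, ρA a a) = 1 := by
    have h' : ∑ a : Fin dA, ∑ b : Fin dB, Complex.normSq (ψ (a,b)) = 1 := by
      have h0 : ∑ i, Complex.normSq (ψ i) = 1 := hψ
      rw [Fintype.sum_prod_type] at h0; exact h0
    have h2 : (∑ a, ρA a a) = ∑ a : Fin dA, ∑ b : Fin dB, (Complex.normSq (ψ (a,b)) : ℂ) := by
      simp only [hρ', Complex.mul_conj]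
    rw [h2, show (∑ a : Fin dA, ∑ b : Fin dB, (Complex.normSq (ψ (a,b)) : ℂ)) = ((1:ℝ):ℂ) from
      by rw [← h']; push_cast; ring]
    norm_num
  set P : ℂ := ∑ a, ∑ a', ρA a a' * ρA a' a with hPdef
  have htr : (symProj (Fin dA) * (ρA ⊗ₖ ρA) * symProj (Fin dA)).trace = 2⁻¹ * (1 + P) := by
    rw [aux_T1, hT1]; ring
  have htr2 : ((asymProj (Fin dA) ⊗ₖ asymProj (Fin dB)) * reindexAB (pure2 ψ)).trace =
      2⁻¹ * (1 - P) := by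
    rw [aux_T2]
    simp only [← hρ']
    rw [show (∑ a, ∑ a', ρA a a * ρA a' a') = (∑ a, ρA a a) * (∑ a, ρA a a) from
      (Finset.sum_mul_sum _ _ _ _).symm, hT1]
    ring
  -- spectral facts
  have hrspec : ∀ a c, ρA a c = ∑ i, (α i:ℂ) * (v i a * conj (v i c)) := by
    intro a c
    rw [hspec, Matrix.sum_apply]
    simp only [Matrix.smul_apply, outer, smul_eq_mul]
  have hTspec : (∑ a, ρA a a) = ∑ i, (α i : ℂ) := by
    simp only [hrspec]
    rw [Finset.sum_comm]
    refine Finset.sum_congr rfl fun i _ => ?_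
    rw [← Finset.mul_sum]
    have h := hortho i i
    rw [if_pos rfl] at h
    rw [show (∑ a, v i a * conj (v i a)) = ∑ a, conj (v i a) * v i a from
      Finset.sum_congr rfl fun a _ => mul_comm _ _, h, mul_one]
  have hPspec : P = ∑ i, (α i:ℂ) * (α i:ℂ) := by
    rw [hPdef]
    simp only [hrspec]
    have hexp : ∀ a a' : Fin dA,
        (∑ i, (α i:ℂ) * (v i a * conj (v i a'))) * (∑ j, (α j:ℂ) * (v j a' * conj (v j a))) =
        ∑ i, ∑ j, ((α i:ℂ) * (v i a * conj (v i a'))) * ((α j:ℂ) * (v j a' * conj (v j a))) :=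
      fun a a' => Finset.sum_mul_sum _ _ _ _
    simp only [hexp]
    rw [sum_swap4]
    refine Finset.sum_congr rfl fun i _ => ?_
    have hji : ∀ j, (∑ a, ∑ a',
        ((α i:ℂ) * (v i a * conj (v i a'))) * ((α j:ℂ) * (v j a' * conj (v j a)))) =
        ((α i:ℂ) * (α j:ℂ)) * ((∑ a, conj (v j a) * v i a) * (∑ a, conj (v i a) * v j a)) :=
      fun j => inner_helper _ _ _ _ (fun a a' => by ring)
    simp only [hji, hortho]
    simp [Finset.sum_ite_eq, eq_comm]
  have hTs : (∑ i, (α i:ℂ)) = 1 := by rw [← hTspec]; exact hT1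
  -- part 2
  have hsum : (1 - (symProj (Fin dA) * (ρA ⊗ₖ ρA) * symProj (Fin dA)).trace) =
      ∑ p ∈ Finset.univ.filter (fun p : Fin dA × Fin dA => p.1 < p.2),
        ((α p.1 : ℂ) * (α p.2 : ℂ)) := by
    rw [htr]
    have hp := pair_sum (fun i => (α i : ℂ))
    rw [hTs] at hp
    linear_combination (-(2⁻¹ : ℂ)) * hPspec + (2⁻¹ : ℂ) * hp
  refine ⟨?_, hsum, ?_⟩
  · -- part 1
    have hmat : ptraceB (((1 : Matrix (Fin dA × Fin dA) (Fin dA × Fin dA) ℂ) ⊗ₖ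
        symProj (Fin dB)) * reindexAB (pure2 ψ)) =
        symProj (Fin dA) * (ρA ⊗ₖ ρA) * symProj (Fin dA) := by
      ext ⟨a,a'⟩ ⟨c,c'⟩
      rw [aux_L1, aux_L2, hρ]
    unfold toyReduced
    rw [hmat, htr2, htr, smul_smul, div_eq_mul_inv]
    congr 2
    ring
  · -- part 3
    intro hrank
    rw [hsum, Complex.re_sum]
    have hterm : ∀ p ∈ Finset.univ.filter (fun p : Fin dA × Fin dA => p.1 < p.2),
        ((α p.1 : ℂ) * (α p.2 : ℂ)).re = α p.1 * α p.2 := by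
      intro p _
      rw [← Complex.ofReal_mul, Complex.ofReal_re]
    rw [Finset.sum_congr rfl hterm]
    by_contra hns
    push_neg at hns
    have hnn : ∀ p ∈ Finset.univ.filter (fun p : Fin dA × Fin dA => p.1 < p.2),
        0 ≤ α p.1 * α p.2 := fun p _ => mul_nonneg (hα _) (hα _)
    have hz0 : ∑ p ∈ Finset.univ.filter (fun p : Fin dA × Fin dA => p.1 < p.2),
        α p.1 * α p.2 = 0 := le_antisymm hns (Finset.sum_nonneg hnn)
    have hzero := (Finset.sum_eq_zero_iff_of_nonneg hnn).1 hz0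
    have hle : ρA.rank ≤ 1 := by
      by_cases hex : ∃ i, α i ≠ 0
      · obtain ⟨i₀, hi₀⟩ := hex
        have hz : ∀ j, j ≠ i₀ → α j = 0 := by
          intro j hj
          rcases lt_or_gt_of_ne hj with h | h
          · have hm := hzero (j, i₀) (by simp [Finset.mem_filter, h])
            rcases mul_eq_zero.1 hm with h' | h'
            · exact h'
            · exact absurd h' hi₀
          · have hm := hzero (i₀, j) (by simp [Finset.mem_filter, h])
            rcases mul_eq_zero.1 hm with h' | h'
            · exact absurd h' hi₀
            · exact h'
        have hρA : ρA = (α i₀ : ℂ) • outer (v i₀) := by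
          rw [hspec]
          rw [Finset.sum_eq_single i₀]
          · intro j _ hj; rw [hz j hj]; simp
          · intro h; exact absurd (Finset.mem_univ i₀) h
        rw [hρA]; exact rank_smul_outer_le_one _ _
      · push_neg at hex
        have hρA : ρA = 0 := by
          rw [hspec]; apply Finset.sum_eq_zero; intro i _; rw [hex i]; simp
        rw [hρA, Matrix.rank_zero]
        omega
    omega
end
end

section
/- Violation of purification in the toy model for d_A = 2: the state ω = (1/2)(|0,0⟩⟨0,0| + |1,1⟩⟨1,1|) on ℂ² ⊗ ℂ² is a convex combination of states |ψ⟩⟨ψ|^{⊗2} (namely of |0⟩⟨0|^{⊗2} and |1⟩⟨1|^{⊗2}), but it is not equal to any toy-model reduced state ω_A of a pure bipartite state: for every finite d_B and every unit vector ψ ∈ ℂ² ⊗ ℂ^{d_B}, ω_A(ψ) = S(ρ⊗ρ)S + (1 − Tr(S(ρ⊗ρ)S))·S/3 ≠ ω, where ρ = Tr_B|ψ⟩⟨ψ| and S is the symmetric projector on ℂ²⊗ℂ². -/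
open Matrix BigOperators
open scoped Kronecker ComplexConjugate

noncomputable section

/-- standard basis vectors of ℂ² -/
def e2 (i : Fin 2) : Fin 2 → ℂ := fun j => if j = i then 1 else 0

set_option maxHeartbeats 4000000

theorem stmt_18 (ω : Matrix (Fin 2 × Fin 2) (Fin 2 × Fin 2) ℂ)
    (hω : ω = (2⁻¹ : ℂ) • pure2 (e2 0) + (2⁻¹ : ℂ) • pure2 (e2 1)) :
    (ω ∈ convexHull ℝ {M : Matrix (Fin 2 × Fin 2) (Fin 2 × Fin 2) ℂ |
        ∃ χ : Fin 2 → ℂ, unitVec χ ∧ M = pure2 χ}) ∧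
      ∀ (dB : ℕ) (ψ : Fin 2 × Fin dB → ℂ), unitVec ψ →
        ∀ ρ : Matrix (Fin 2) (Fin 2) ℂ, ρ = ptraceB (outer ψ) →
          symProj (Fin 2) * (ρ ⊗ₖ ρ) * symProj (Fin 2) +
              (1 - (symProj (Fin 2) * (ρ ⊗ₖ ρ) * symProj (Fin 2)).trace) •
                ((3⁻¹ : ℂ) • symProj (Fin 2)) ≠ ω := by
  constructor
  · have h0 : pure2 (e2 0) ∈ {M : Matrix (Fin 2 × Fin 2) (Fin 2 × Fin 2) ℂ |
        ∃ χ : Fin 2 → ℂ, unitVec χ ∧ M = pure2 χ} :=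
      ⟨e2 0, by simp [unitVec, e2, Fin.sum_univ_succ], rfl⟩
    have h1 : pure2 (e2 1) ∈ {M : Matrix (Fin 2 × Fin 2) (Fin 2 × Fin 2) ℂ |
        ∃ χ : Fin 2 → ℂ, unitVec χ ∧ M = pure2 χ} :=
      ⟨e2 1, by simp [unitVec, e2, Fin.sum_univ_succ], rfl⟩
    have hmem := (convex_convexHull ℝ _) (subset_convexHull ℝ _ h0) (subset_convexHull ℝ _ h1)
      (by norm_num : (0:ℝ) ≤ 1/2) (by norm_num : (0:ℝ) ≤ 1/2) (by norm_num : (1/2:ℝ)+1/2 = 1)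
    convert hmem using 1
    rw [hω]
    ext p q
    simp [Matrix.add_apply, Matrix.smul_apply, Complex.real_smul]
  · intro dB ψ hψ ρ hρ heq
    set a := ∑ b, Complex.normSq (ψ (0, b)) with ha_def
    set d := ∑ b, Complex.normSq (ψ (1, b)) with hd_def
    have ha : 0 ≤ a := Finset.sum_nonneg fun _ _ => Complex.normSq_nonneg _
    have hd : 0 ≤ d := Finset.sum_nonneg fun _ _ => Complex.normSq_nonneg _
    have had : a + d = 1 := by
      have h := hψ
      rw [unitVec, Fintype.sum_prod_type] at h
      rw [Fin.sum_univ_succ, Fin.sum_univ_succ] at h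
      simpa [ha_def, hd_def] using h
    have hA : ρ 0 0 = (a : ℂ) := by
      rw [hρ, ha_def]; push_cast
      simp [ptraceB, outer, Complex.mul_conj]
    have hD : ρ 1 1 = (d : ℂ) := by
      rw [hρ, hd_def]; push_cast
      simp [ptraceB, outer, Complex.mul_conj]
    set x := (ρ 0 1).re with hx_def
    set y := (ρ 0 1).im with hy_def
    have hB : ρ 0 1 = (x:ℂ) + (y:ℂ) * Complex.I := (Complex.re_add_im _).symm
    have hC : ρ 1 0 = (starRingEnd ℂ) (ρ 0 1) := by
      rw [hρ]
      simp only [ptraceB, outer, map_sum, _root_.map_mul, Complex.conj_conj]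
      exact Finset.sum_congr rfl fun b _ => mul_comm _ _
    have hC' : ρ 1 0 = (x:ℂ) - (y:ℂ) * Complex.I := by
      rw [hC, hB]
      simp [Complex.conj_I]
      ring
    have e1 := congrFun (congrFun heq ((0:Fin 2),(0:Fin 2))) ((0:Fin 2),(0:Fin 2))
    have e2' := congrFun (congrFun heq ((1:Fin 2),(1:Fin 2))) ((1:Fin 2),(1:Fin 2))
    have e3 := congrFun (congrFun heq ((0:Fin 2),(1:Fin 2))) ((0:Fin 2),(1:Fin 2))
    simp only [hω, Matrix.add_apply, Matrix.smul_apply, Matrix.mul_apply, Matrix.trace,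
      Matrix.diag, symProj, swapMat, Matrix.one_apply, Matrix.kroneckerMap_apply,
      pure2, outer, vec2, e2, Fintype.sum_prod_type, Fin.sum_univ_succ, Finset.sum_empty,
      Fin.sum_univ_zero, smul_eq_mul] at e1 e2' e3
    norm_num [Prod.ext_iff] at e1
    norm_num [Prod.ext_iff] at e2'
    norm_num [Prod.ext_iff] at e3
    rw [hA, hD, hB, hC'] at e1 e2' e3
    rw [Complex.ext_iff] at e1 e2' e3
    have r1 := e1.1
    have r2 := e2'.1
    have r3 := e3.1
    norm_num [Complex.div_re, Complex.div_im] at r1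
    norm_num [Complex.div_re, Complex.div_im] at r2
    norm_num [Complex.div_re, Complex.div_im] at r3
    nlinarith [sq_nonneg x, sq_nonneg y, sq_nonneg (a-d), mul_nonneg ha hd, had, ha, hd]
end
end

section
/- For d prime, the d+1 mutually unbiased bases {|φ_i^j⟩ : i = 1..d, j = 1..d+1} of ℂ^d form a projective 2-design, i.e. (1/(d(d+1))) Σ_{i,j} |φ_i^j⟩⟨φ_i^j|^{⊗2} = S/Tr(S), equivalently (1/2) Σ_{i,j} |φ_i^j⟩⟨φ_i^j|^{⊗2} = S, where S is the symmetric projector on ℂ^d ⊗ ℂ^d with Tr(S) = d(d+1)/2. -/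
open Matrix BigOperators
open scoped Kronecker ComplexConjugate

noncomputable section

/-- the inner product ⟨φ|χ⟩ on ℂ^d -/
def ip {d : ℕ} (φ χ : Fin d → ℂ) : ℂ := ∑ i, conj (φ i) * χ i

section aux
variable {d : ℕ}

lemma trace_eq_sum_sum {I : Type*} [Fintype I] (M N : Matrix I I ℂ) :
    (M * N).trace = ∑ p, ∑ q, M p q * N q p := by
  simp [Matrix.trace, Matrix.diag, Matrix.mul_apply]

lemma ip_vec2 (ψ χ : Fin d → ℂ) :
    ∑ p : Fin d × Fin d, conj (vec2 ψ p) * vec2 χ p = (ip ψ χ) ^ 2 := by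
  rw [sq, ip, Finset.sum_mul_sum, Fintype.sum_prod_type]
  refine Finset.sum_congr rfl fun a _ => Finset.sum_congr rfl fun b _ => ?_
  simp only [vec2, _root_.map_mul]; ring

lemma trace_pure2_mul (ψ χ : Fin d → ℂ) :
    (pure2 ψ * pure2 χ).trace = ((Complex.normSq (ip ψ χ) : ℝ) : ℂ) ^ 2 := by
  rw [trace_eq_sum_sum]
  have h1 : ∑ p, ∑ q, (pure2 ψ) p q * (pure2 χ) q p
      = (∑ p, vec2 ψ p * conj (vec2 χ p)) * (∑ q, conj (vec2 ψ q) * vec2 χ q) := by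
    rw [Finset.sum_mul_sum]
    refine Finset.sum_congr rfl fun p _ => Finset.sum_congr rfl fun q _ => ?_
    simp only [pure2, outer]; ring
  have h2 : ∑ p : Fin d × Fin d, vec2 ψ p * conj (vec2 χ p)
      = conj (∑ q : Fin d × Fin d, conj (vec2 ψ q) * vec2 χ q) := by
    rw [map_sum]
    refine Finset.sum_congr rfl fun p _ => ?_
    rw [_root_.map_mul, Complex.conj_conj]
  rw [h1, h2, ip_vec2, ← Complex.normSq_eq_conj_mul_self]
  rw [map_pow]
  push_cast
  ring

lemma trace_pure2_s19 (ψ : Fin d → ℂ) (h : ip ψ ψ = 1) : (pure2 ψ).trace = 1 := by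
  have : (pure2 ψ).trace = ∑ p : Fin d × Fin d, conj (vec2 ψ p) * vec2 ψ p := by
    simp only [Matrix.trace, Matrix.diag, pure2, outer]
    exact Finset.sum_congr rfl fun p _ => by ring
  rw [this, ip_vec2, h, one_pow]

lemma trace_pure2_swap (ψ : Fin d → ℂ) (h : ip ψ ψ = 1) :
    (pure2 ψ * swapMat (Fin d)).trace = 1 := by
  rw [trace_eq_sum_sum]
  have : ∀ p : Fin d × Fin d,
      ∑ q : Fin d × Fin d, (pure2 ψ) p q * swapMat (Fin d) q p
        = (pure2 ψ) p (p.2, p.1) := by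
    intro p
    rw [Finset.sum_eq_single (p.2, p.1)]
    · simp [swapMat]
    · intro q _ hq
      have : ¬(q.1 = p.2 ∧ q.2 = p.1) := by
        intro ⟨h1, h2⟩; exact hq (Prod.ext h1 h2)
      simp [swapMat, this]
    · simp
  rw [Finset.sum_congr rfl fun p _ => this p]
  have : ∑ p : Fin d × Fin d, (pure2 ψ) p (p.2, p.1)
      = ∑ p : Fin d × Fin d, conj (vec2 ψ p) * vec2 ψ p := by
    refine Finset.sum_congr rfl fun p _ => ?_
    simp only [pure2, outer, vec2, _root_.map_mul]; ring
  rw [this, ip_vec2, h, one_pow]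

lemma trace_swap : (swapMat (Fin d)).trace = (d : ℂ) := by
  have h : (swapMat (Fin d)).trace = ∑ p : Fin d × Fin d, if p.1 = p.2 then (1:ℂ) else 0 := by
    simp only [Matrix.trace, Matrix.diag, swapMat]
    refine Finset.sum_congr rfl fun p _ => ?_
    by_cases h : p.1 = p.2 <;> simp [h]
  rw [h, Fintype.sum_prod_type]
  simp [Finset.sum_ite_eq]

lemma swap_mul_swap_s19 : swapMat (Fin d) * swapMat (Fin d) = 1 := by
  ext p q
  rw [Matrix.mul_apply, Finset.sum_eq_single (p.2, p.1)]
  · by_cases h : p = q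
    · subst h; simp [swapMat, Matrix.one_apply]
    · have : ¬((p.2, p.1).1 = q.2 ∧ (p.2, p.1).2 = q.1) := by
        intro ⟨h1, h2⟩; exact h (Prod.ext h2 h1)
      simp [swapMat, Matrix.one_apply, h, this]
  · intro r _ hr
    have : ¬(p.1 = r.2 ∧ p.2 = r.1) := by
      intro ⟨h1, h2⟩; exact hr (Prod.ext h2.symm h1.symm)
    simp [swapMat, this]
  · simp

lemma swap_herm : (swapMat (Fin d))ᴴ = swapMat (Fin d) := by
  ext p q
  simp only [Matrix.conjTranspose_apply, swapMat]
  by_cases h : q.1 = p.2 ∧ q.2 = p.1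
  · obtain ⟨h1, h2⟩ := h
    simp [h1, h2]
  · have h' : ¬(p.1 = q.2 ∧ p.2 = q.1) := by
      intro ⟨h1, h2⟩; exact h ⟨h2.symm, h1.symm⟩
    simp [h, h']

lemma pure2_herm (ψ : Fin d → ℂ) : (pure2 ψ)ᴴ = pure2 ψ := by
  ext p q
  simp only [Matrix.conjTranspose_apply, pure2, outer, Complex.star_def,
    _root_.map_mul, Complex.conj_conj]
  ring

lemma eq_zero_of_herm_trace {I : Type*} [Fintype I] (M : Matrix I I ℂ)
    (hH : Mᴴ = M) (h : (M * M).trace = 0) : M = 0 := by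
  have key : ((∑ i, ∑ j, Complex.normSq (M j i) : ℝ) : ℂ) = 0 := by
    rw [← h]
    nth_rewrite 2 [← hH]
    rw [trace_eq_sum_sum]
    push_cast
    refine Finset.sum_congr rfl fun i _ => Finset.sum_congr rfl fun j _ => ?_
    rw [Matrix.conjTranspose_apply, Complex.star_def, ← Complex.normSq_eq_conj_mul_self]
  rw [Complex.ofReal_eq_zero] at key
  have hz : ∀ i ∈ (Finset.univ : Finset I), ∑ j, Complex.normSq (M j i) = 0 := by
    rw [← Finset.sum_eq_zero_iff_of_nonneg]
    · exact key
    · intro i _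
      exact Finset.sum_nonneg fun j _ => Complex.normSq_nonneg _
  ext j i
  have := (Finset.sum_eq_zero_iff_of_nonneg
    (fun j _ => Complex.normSq_nonneg (M j i))).1 (hz i (Finset.mem_univ i)) j
    (Finset.mem_univ j)
  simpa using Complex.normSq_eq_zero.1 this

end aux

theorem stmt_19 (d : ℕ) (hd : Nat.Prime d)
    (B : Fin (d + 1) → Fin d → (Fin d → ℂ))
    (horth : ∀ j i i', ip (B j i) (B j i') = if i = i' then 1 else 0)
    (hmub : ∀ j k, j ≠ k → ∀ i i', ‖ip (B j i) (B k i')‖ ^ 2 = 1 / (d : ℝ)) :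
    ((2⁻¹ : ℂ) • ∑ j, ∑ i, pure2 (B j i) = symProj (Fin d)) ∧
      ((d * (d + 1) : ℂ))⁻¹ • ∑ j, ∑ i, pure2 (B j i) =
        (symProj (Fin d)).trace⁻¹ • symProj (Fin d) := by
  have hdC : (d : ℂ) ≠ 0 := Nat.cast_ne_zero.2 hd.pos.ne'
  set W := swapMat (Fin d) with hW
  set F : Matrix (Fin d × Fin d) (Fin d × Fin d) ℂ := ∑ j, ∑ i, pure2 (B j i) with hF
  have hunit : ∀ j i, ip (B j i) (B j i) = 1 := by intro j i; rw [horth]; simp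
  -- reduce traces against F to double sums
  have hmulsum : ∀ G : Matrix (Fin d × Fin d) (Fin d × Fin d) ℂ,
      (F * G).trace = ∑ j, ∑ i, (pure2 (B j i) * G).trace := by
    intro G
    rw [hF, Finset.sum_mul, Matrix.trace_sum]
    exact Finset.sum_congr rfl fun j _ => by rw [Finset.sum_mul, Matrix.trace_sum]
  have hsummul : ∀ ψ : Fin d → ℂ,
      (pure2 ψ * F).trace = ∑ k, ∑ l, (pure2 ψ * pure2 (B k l)).trace := by
    intro ψ
    rw [hF, Finset.mul_sum, Matrix.trace_sum]
    exact Finset.sum_congr rfl fun k _ => by rw [Finset.mul_sum, Matrix.trace_sum]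
  -- the basic overlap values
  have hJ : ∀ j i k l, ((Complex.normSq (ip (B j i) (B k l)) : ℝ) : ℂ) ^ 2
      = if j = k then (if i = l then 1 else 0) else ((d : ℂ) ^ 2)⁻¹ := by
    intro j i k l
    by_cases h : j = k
    · subst h
      rw [horth]
      by_cases h' : i = l <;> simp [h']
    · have hm := hmub j k h i l
      rw [Complex.sq_norm] at hm
      rw [hm, if_neg h]
      push_cast
      rw [div_pow, one_pow, one_div]
  -- trace of pure2 ψ against F is 2
  have hinner : ∀ j i, (pure2 (B j i) * F).trace = 2 := by
    intro j i
    rw [hsummul]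
    have hk : ∀ k, ∑ l, (pure2 (B j i) * pure2 (B k l)).trace
        = if j = k then 1 else (d : ℂ)⁻¹ := by
      intro k
      rw [Finset.sum_congr rfl fun l _ => trace_pure2_mul _ _,
        Finset.sum_congr rfl fun l _ => hJ j i k l]
      by_cases h : j = k
      · simp [h, Finset.sum_ite_eq]
      · have hl : ∀ l : Fin d,
            (if j = k then (if i = l then (1 : ℂ) else 0) else ((d : ℂ) ^ 2)⁻¹)
              = ((d : ℂ) ^ 2)⁻¹ := fun l => if_neg h
        rw [Finset.sum_congr rfl fun l _ => hl l, if_neg h, Finset.sum_const,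
          Finset.card_univ, Fintype.card_fin, nsmul_eq_mul]
        field_simp
    rw [Finset.sum_congr rfl fun k _ => hk k]
    have e : ∀ k : Fin (d + 1), (if j = k then (1 : ℂ) else (d : ℂ)⁻¹)
        = (d : ℂ)⁻¹ + if j = k then 1 - (d : ℂ)⁻¹ else 0 := by
      intro k; by_cases h : j = k <;> simp [h]
    rw [Finset.sum_congr rfl fun k _ => e k, Finset.sum_add_distrib,
      Finset.sum_const, Finset.sum_ite_eq, Finset.card_univ]
    simp only [Finset.mem_univ, if_true, Fintype.card_fin, nsmul_eq_mul]
    push_cast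
    field_simp
    ring
  have hFF : (F * F).trace = 2 * ((d : ℂ) + 1) * d := by
    rw [hmulsum]
    rw [Finset.sum_congr rfl fun j _ => Finset.sum_congr rfl fun i _ => hinner j i]
    simp only [Finset.sum_const, Finset.card_univ, Fintype.card_fin, nsmul_eq_mul]
    push_cast
    ring
  have hFtr : F.trace = ((d : ℂ) + 1) * d := by
    rw [hF, Matrix.trace_sum]
    have hj : ∀ j, (∑ i, pure2 (B j i)).trace = (d : ℂ) := by
      intro j
      rw [Matrix.trace_sum, Finset.sum_congr rfl fun i _ => trace_pure2_s19 _ (hunit j i)]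
      simp
    rw [Finset.sum_congr rfl fun j _ => hj j]
    simp only [Finset.sum_const, Finset.card_univ, Fintype.card_fin, nsmul_eq_mul]
    push_cast
    ring
  have hFW : (F * W).trace = ((d : ℂ) + 1) * d := by
    rw [hmulsum]
    rw [Finset.sum_congr rfl fun j _ => Finset.sum_congr rfl fun i _ =>
      trace_pure2_swap _ (hunit j i)]
    simp only [Finset.sum_const, Finset.card_univ, Fintype.card_fin, nsmul_eq_mul]
    push_cast
    ring
  -- hermiticity
  have hFherm : Fᴴ = F := by
    rw [hF, Matrix.conjTranspose_sum]
    refine Finset.sum_congr rfl fun j _ => ?_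
    rw [Matrix.conjTranspose_sum]
    exact Finset.sum_congr rfl fun i _ => pure2_herm _
  have hQherm : (F - (1 + W))ᴴ = F - (1 + W) := by
    rw [Matrix.conjTranspose_sub, Matrix.conjTranspose_add, Matrix.conjTranspose_one,
      hW, swap_herm, hFherm]
  -- trace of Q² is zero
  have htr1 : (1 : Matrix (Fin d × Fin d) (Fin d × Fin d) ℂ).trace = (d : ℂ) * d := by
    have hc : Fintype.card (Fin d × Fin d) = d * d := by simp
    rw [Matrix.trace_one, hc]
    push_cast
    ring
  have htrQ : ((F - (1 + W)) * (F - (1 + W))).trace = 0 := by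
    have expand : (F - (1 + W)) * (F - (1 + W))
        = F * F - F * (1 + W) - ((1 + W) * F - (1 + W) * (1 + W)) := by
      rw [sub_mul, mul_sub, mul_sub]
    rw [expand, Matrix.trace_sub, Matrix.trace_sub, Matrix.trace_sub]
    have e1 : (F * (1 + W)).trace = F.trace + (F * W).trace := by
      rw [mul_add, mul_one, Matrix.trace_add]
    have e2 : ((1 + W) * F).trace = F.trace + (F * W).trace := by
      rw [Matrix.trace_mul_comm, e1]
    have e3 : ((1 + W) * (1 + W)).trace = (d : ℂ) * d + (d : ℂ) + ((d : ℂ) + (d : ℂ) * d) := by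
      rw [mul_add, add_mul, add_mul]
      simp only [mul_one, one_mul]
      rw [hW, swap_mul_swap_s19]
      rw [Matrix.trace_add, Matrix.trace_add, Matrix.trace_add, htr1, trace_swap]
    rw [e1, e2, e3, hFF, hFtr, hFW]
    ring
  -- conclude F = 1 + W
  have hQ0 : F - (1 + W) = 0 := eq_zero_of_herm_trace _ hQherm htrQ
  have hFeq : F = 1 + W := sub_eq_zero.mp hQ0
  have htrS : (symProj (Fin d)).trace = (2⁻¹ : ℂ) * ((d : ℂ) * d + d) := by
    simp only [symProj, Matrix.trace_smul, Matrix.trace_add, htr1, trace_swap, smul_eq_mul]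
  constructor
  · show (2⁻¹ : ℂ) • F = symProj (Fin d)
    rw [hFeq, symProj, hW]
  · show ((d * (d + 1) : ℂ))⁻¹ • F = (symProj (Fin d)).trace⁻¹ • symProj (Fin d)
    rw [hFeq, htrS, symProj, ← hW, smul_smul]
    congr 1
    rw [← mul_inv]
    congr 1
    ring
end
end
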